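/- Let X and Y be random variables with values in a measurable space 𝒳, whose distributions have densities f_X(x) = C_X · g_X(f(x)) and f_Y(x) = C_Y · g_Y(f(x)) with respect to a common reference measure μ, where g_X, g_Y : ℝ → ℝ are positive measurable functions, f : 𝒳 → ℝ is measurable, and C_X, C_Y ∈ ℝ are normalising constants. If g_X/g_Y is monotone increasing, then for every t ∈ ℝ and every measurable set A ⊆ 𝒳 with P(X ∈ A) > 0 and P(Y ∈ A) > 0, one has P(f(X) > t | X ∈ A) ≥ P(f(Y) > t | Y ∈ A). -/

import Mathlib

open MeasureTheory

private lemma ennreal_div_le_div {a b c d : ENNReal} (hb0 : b ≠ 0) (hbt : b ≠ ⊤)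
    (hd0 : d ≠ 0) (hdt : d ≠ ⊤) (h : a * d ≤ c * b) : a / b ≤ c / d := by
  rw [ENNReal.div_le_iff_le_mul (Or.inl hb0) (Or.inl hbt), div_eq_mul_inv, mul_right_comm,
    ← div_eq_mul_inv, ENNReal.le_div_iff_mul_le (Or.inl hd0) (Or.inl hdt)]
  exact h

/-- Let `X`, `Y` be random variables with laws given by densities
`x ↦ C_X · g_X(f x)` and `x ↦ C_Y · g_Y(f x)` with respect to a common reference
measure `μ`, where `g_X, g_Y` are positive measurable functions on `ℝ`. If
`g_X / g_Y` is monotone increasing, then for every `t` and every measurable set `A`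
of positive probability under both laws,
`P(f(X) > t ∣ X ∈ A) ≥ P(f(Y) > t ∣ Y ∈ A)`, where conditional probabilities are
the ratios `P(f(X) > t ∧ X ∈ A) / P(X ∈ A)`. -/
theorem stmt12 {α : Type*} [MeasurableSpace α] (μ : Measure α)
    (gX gY : ℝ → ℝ) (hgX : Measurable gX) (hgY : Measurable gY)
    (hgXpos : ∀ s, 0 < gX s) (hgYpos : ∀ s, 0 < gY s)
    (f : α → ℝ) (hf : Measurable f) (CX CY : ℝ)
    (hX : μ.withDensity (fun x => ENNReal.ofReal (CX * gX (f x))) Set.univ = 1)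
    (hY : μ.withDensity (fun x => ENNReal.ofReal (CY * gY (f x))) Set.univ = 1)
    (hmono : Monotone fun s => gX s / gY s) :
    ∀ (t : ℝ) (A : Set α), MeasurableSet A →
      0 < μ.withDensity (fun x => ENNReal.ofReal (CX * gX (f x))) A →
      0 < μ.withDensity (fun x => ENNReal.ofReal (CY * gY (f x))) A →
      μ.withDensity (fun x => ENNReal.ofReal (CY * gY (f x))) ({x | t < f x} ∩ A) /
          μ.withDensity (fun x => ENNReal.ofReal (CY * gY (f x))) A
        ≤ μ.withDensity (fun x => ENNReal.ofReal (CX * gX (f x))) ({x | t < f x} ∩ A) /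
          μ.withDensity (fun x => ENNReal.ofReal (CX * gX (f x))) A := by
  intro t A hA hXA hYA
  set dX : α → ENNReal := fun x => ENNReal.ofReal (CX * gX (f x)) with hdX
  set dY : α → ENNReal := fun x => ENNReal.ofReal (CY * gY (f x)) with hdY
  have hmX : Measurable dX := (measurable_const.mul (hgX.comp hf)).ennreal_ofReal
  have hmY : Measurable dY := (measurable_const.mul (hgY.comp hf)).ennreal_ofReal
  set νX := μ.withDensity dX with hνX
  set νY := μ.withDensity dY with hνY
  -- positivity of normalising constants
  have hCX : 0 < CX := by
    by_contra h
    push_neg at h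
    have hz : dX = fun _ => (0 : ENNReal) := by
      funext x
      have : CX * gX (f x) ≤ 0 := mul_nonpos_of_nonpos_of_nonneg h (hgXpos (f x)).le
      simp [hdX, ENNReal.ofReal_eq_zero.mpr this]
    have : νX Set.univ = 0 := by rw [hνX, hz]; simp
    rw [hX] at this
    exact one_ne_zero this
  have hCY : 0 < CY := by
    by_contra h
    push_neg at h
    have hz : dY = fun _ => (0 : ENNReal) := by
      funext x
      have : CY * gY (f x) ≤ 0 := mul_nonpos_of_nonpos_of_nonneg h (hgYpos (f x)).le
      simp [hdY, ENNReal.ofReal_eq_zero.mpr this]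
    have : νY Set.univ = 0 := by rw [hνY, hz]; simp
    rw [hY] at this
    exact one_ne_zero this
  set c : ℝ := gX t / gY t with hc
  have hcpos : 0 < c := div_pos (hgXpos t) (hgYpos t)
  set k : ENNReal := ENNReal.ofReal (CX * c / CY) with hk
  have hkr : 0 < CX * c / CY := div_pos (mul_pos hCX hcpos) hCY
  set B : Set α := {x | t < f x} with hB
  have hBmeas : MeasurableSet B := measurableSet_lt measurable_const hf
  -- pointwise density comparisons
  have hpt1 : ∀ x ∈ B ∩ A, k * dY x ≤ dX x := by
    intro x hx
    have hts : t ≤ f x := le_of_lt hx.1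
    have hdiv : c ≤ gX (f x) / gY (f x) := hmono hts
    have hcs : c * gY (f x) ≤ gX (f x) := (le_div_iff₀ (hgYpos (f x))).mp hdiv
    rw [hk, hdY, ← ENNReal.ofReal_mul hkr.le]
    apply ENNReal.ofReal_le_ofReal
    have heq : CX * c / CY * (CY * gY (f x)) = CX * (c * gY (f x)) := by
      field_simp
    rw [heq]
    exact mul_le_mul_of_nonneg_left hcs hCX.le
  have hpt2 : ∀ x ∈ A \ B, dX x ≤ k * dY x := by
    intro x hx
    have hts : f x ≤ t := not_lt.mp hx.2
    have hdiv : gX (f x) / gY (f x) ≤ c := hmono hts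
    have hcs : gX (f x) ≤ c * gY (f x) := (div_le_iff₀ (hgYpos (f x))).mp hdiv
    rw [hk, hdY, ← ENNReal.ofReal_mul hkr.le]
    apply ENNReal.ofReal_le_ofReal
    have heq : CX * c / CY * (CY * gY (f x)) = CX * (c * gY (f x)) := by
      field_simp
    rw [heq]
    exact mul_le_mul_of_nonneg_left hcs hCX.le
  -- integral comparisons
  have h1 : k * νY (B ∩ A) ≤ νX (B ∩ A) := by
    rw [hνX, hνY, withDensity_apply _ (hBmeas.inter hA),
      withDensity_apply _ (hBmeas.inter hA), ← lintegral_const_mul k hmY]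
    exact setLIntegral_mono hmX hpt1
  have h2 : νX (A \ B) ≤ k * νY (A \ B) := by
    rw [hνX, hνY, withDensity_apply _ (hA.diff hBmeas),
      withDensity_apply _ (hA.diff hBmeas), ← lintegral_const_mul k hmY]
    exact setLIntegral_mono (measurable_const.mul hmY) hpt2
  set a := νX (B ∩ A) with ha
  set b := νX (A \ B) with hb
  set a' := νY (B ∩ A) with ha'
  set b' := νY (A \ B) with hb'
  have hAX : νX A = a + b := by
    rw [ha, hb, Set.inter_comm]
    exact (measure_inter_add_diff A hBmeas).symm
  have hAY : νY A = a' + b' := by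
    rw [ha', hb', Set.inter_comm]
    exact (measure_inter_add_diff A hBmeas).symm
  -- cross inequality
  have hcross : a' * b ≤ a * b' := by
    calc a' * b ≤ a' * (k * b') := mul_le_mul_right h2 a'
    _ = k * a' * b' := by ring
    _ ≤ a * b' := mul_le_mul_left h1 b'
  have hkey : a' * νX A ≤ a * νY A := by
    rw [hAX, hAY, mul_add, mul_add]
    exact add_le_add (by rw [mul_comm]) hcross
  -- finiteness of denominators
  have hXfin : νX A ≠ ⊤ := by
    refine ne_top_of_le_ne_top ?_ (measure_mono (Set.subset_univ A))
    rw [hX]; exact ENNReal.one_ne_top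
  have hYfin : νY A ≠ ⊤ := by
    refine ne_top_of_le_ne_top ?_ (measure_mono (Set.subset_univ A))
    rw [hY]; exact ENNReal.one_ne_top
  exact ennreal_div_le_div hYA.ne' hYfin hXA.ne' hXfin hkey
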